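/- Let F^1, ..., F^N be IFSs with probabilities on a compact metric space (X, d), all with common Lipschitz constant 0 ≤ l < 1. For σ ∈ Ω, k ≥ 1, K ∈ H(X) and ς ∈ P(X) define F_k(σ)(K) = ⋃_{i ∈ T, |i| = k} f^{σ(∅)}_{i_1} ∘ f^{σ(i_1)}_{i_2} ∘ ⋯ ∘ f^{σ(i_1 i_2 ... i_{k−1})}_{i_k}(K) and F̃_k(σ)(ς) = Σ_{i ∈ T, |i| = k} (p^{σ(∅)}_{i_1} · p^{σ(i_1)}_{i_2} · ⋯ · p^{σ(i_1...i_{k−1})}_{i_k}) · (f^{σ(∅)}_{i_1} ∘ ⋯ ∘ f^{σ(i_1...i_{k−1})}_{i_k})_* ς. Then both limits F(σ) = lim_{k→∞} F_k(σ)(K) in (H(X), d_H) and F̃(σ) = lim_{k→∞} F̃_k(σ)(ς) in (P(X), d_P) exist, are independent of K and ς respectively, the convergence is uniform in σ, K, and ς, and the resulting maps F : Ω → H(X) and F̃ : Ω → P(X) are continuous. -/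

import Mathlib

open Metric MeasureTheory Filter Set TopologicalSpace
def CodeTree (M N : ℕ) := List (Fin M) → Fin N

lemma codetree_exists_disagree {M N : ℕ} {ω κ : CodeTree M N} (h : ω ≠ κ) :
    ∃ n : ℕ, ∃ i : List (Fin M), i.length = n ∧ ω i ≠ κ i := by
  obtain ⟨i, hi⟩ := Function.ne_iff.mp h
  exact ⟨i.length, i, rfl, hi⟩

open scoped Classical in
noncomputable def treeDist {M N : ℕ} (ω κ : CodeTree M N) : ℝ :=
  if h : ω = κ then 0
  else (1 / (M : ℝ)) ^ Nat.find (codetree_exists_disagree h)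

section
open scoped Classical

variable {M N : ℕ}

lemma treeDist_nonneg (a b : CodeTree M N) : 0 ≤ treeDist a b := by
  unfold treeDist
  by_cases h : a = b
  · simp [h]
  · rw [dif_neg h]; positivity

lemma treeDist_comm (ω κ : CodeTree M N) : treeDist ω κ = treeDist κ ω := by
  unfold treeDist
  by_cases h : ω = κ
  · subst h; simp
  · rw [dif_neg h, dif_neg (Ne.symm h)]
    congr 1
    exact le_antisymm
      (Nat.find_mono fun n => fun ⟨i, hl, hne⟩ => ⟨i, hl, hne.symm⟩)
      (Nat.find_mono fun n => fun ⟨i, hl, hne⟩ => ⟨i, hl, hne.symm⟩)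

lemma treeDist_triangle [NeZero M] (x y z : CodeTree M N) :
    treeDist x y ≤ treeDist x z + treeDist z y := by
  have hMpos : (0 : ℕ) < M := Nat.pos_of_ne_zero (NeZero.ne M)
  have hM : (0 : ℝ) < 1 / (M : ℝ) := by positivity
  have hM1 : (1 / (M : ℝ)) ≤ 1 := by
    rw [div_le_one (by exact_mod_cast hMpos)]
    exact_mod_cast hMpos
  by_cases hxy : x = y
  · rw [show treeDist x y = 0 by rw [hxy]; simp [treeDist]]
    exact add_nonneg (treeDist_nonneg _ _) (treeDist_nonneg _ _)
  by_cases hxz : x = z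
  · subst hxz
    rw [show treeDist x x = 0 by simp [treeDist], zero_add]
  by_cases hzy : z = y
  · subst hzy
    rw [show treeDist z z = 0 by simp [treeDist], add_zero]
  -- all distinct
  have key : Nat.find (codetree_exists_disagree hxz) ≤ Nat.find (codetree_exists_disagree hxy)
      ∨ Nat.find (codetree_exists_disagree hzy) ≤ Nat.find (codetree_exists_disagree hxy) := by
    obtain ⟨i, hlen, hne⟩ := Nat.find_spec (codetree_exists_disagree hxy)
    by_cases h : x i = z i
    · right
      exact Nat.find_le ⟨i, hlen, by rw [← h]; exact hne⟩
    · left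
      exact Nat.find_le ⟨i, hlen, h⟩
  rw [treeDist, dif_neg hxy, treeDist, dif_neg hxz, treeDist, dif_neg hzy]
  rcases key with h | h
  · calc (1 / (M:ℝ)) ^ Nat.find (codetree_exists_disagree hxy)
        ≤ (1 / (M:ℝ)) ^ Nat.find (codetree_exists_disagree hxz) :=
          pow_le_pow_of_le_one (le_of_lt hM) hM1 h
      _ ≤ _ := le_add_of_nonneg_right (by positivity)
  · calc (1 / (M:ℝ)) ^ Nat.find (codetree_exists_disagree hxy)
        ≤ (1 / (M:ℝ)) ^ Nat.find (codetree_exists_disagree hzy) :=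
          pow_le_pow_of_le_one (le_of_lt hM) hM1 h
      _ ≤ _ := le_add_of_nonneg_left (by positivity)

lemma treeDist_eq_zero [NeZero M] {x y : CodeTree M N} (h : treeDist x y = 0) : x = y := by
  by_contra hne
  have hMpos : (0 : ℕ) < M := Nat.pos_of_ne_zero (NeZero.ne M)
  have hM : (0 : ℝ) < 1 / (M : ℝ) := by positivity
  rw [treeDist, dif_neg hne] at h
  exact (pow_pos hM _).ne' h

end

noncomputable instance {M N : ℕ} [NeZero M] : MetricSpace (CodeTree M N) where
  dist := treeDist
  dist_self := fun ω => by simp [treeDist]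
  dist_comm := treeDist_comm
  dist_triangle := fun a b c => treeDist_triangle a c b
  eq_of_dist_eq_zero := treeDist_eq_zero

/-- The composition `f^{σ(∅)}_{i₁} ∘ f^{σ(i₁)}_{i₂} ∘ ⋯ ∘ f^{σ(i₁…i_{k-1})}_{i_k}`
along the branch `i = i₁i₂…i_k` of the construction tree of `σ`. -/
def treeComp {X : Type*} {M N : ℕ} (f : Fin N → Fin M → X → X) :
    List (Fin M) → CodeTree M N → X → X
  | [], _ => id
  | m :: t, σ => f (σ []) m ∘ treeComp f t (fun j => σ (m :: j))

/-- The product `p^{σ(∅)}_{i₁} ⋯ p^{σ(i₁…i_{k-1})}_{i_k}` of the probabilities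
along the branch `i` of the construction tree of `σ`. -/
def treeProb {M N : ℕ} (p : Fin N → Fin M → NNReal) :
    List (Fin M) → CodeTree M N → NNReal
  | [], _ => 1
  | m :: t, σ => p (σ []) m * treeProb p t (fun j => σ (m :: j))

/-- The Monge–Kantorovich metric on measures. -/
noncomputable def MKdist {Y : Type*} [MeasurableSpace Y] [MetricSpace Y]
    (μ ν : Measure Y) : ℝ :=
  ⨆ f : {g : Y → ℝ // LipschitzWith 1 g}, ((∫ x, f.1 x ∂μ) - (∫ x, f.1 x ∂ν))

section IFSAux
set_option linter.unusedSectionVars false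

open Metric MeasureTheory Filter Set TopologicalSpace

variable {X : Type*} [MetricSpace X] [CompactSpace X] [Nonempty X]
  [MeasurableSpace X] [BorelSpace X]
variable {M N : ℕ} [NeZero M]

instance fintypeListLen (k : ℕ) : Fintype {i : List (Fin M) // i.length = k} :=
  inferInstanceAs (Fintype (List.Vector (Fin M) k))

instance uniqueListLen0 : Unique {i : List (Fin M) // i.length = 0} where
  default := ⟨[], rfl⟩
  uniq := by rintro ⟨i, hi⟩; ext1; simpa [List.length_eq_zero_iff] using hi

/-- Cons as an equivalence between `Fin M × (lists of length k)` and lists of length `k+1`. -/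
def consEquiv (M : ℕ) (k : ℕ) :
    (Fin M × {i : List (Fin M) // i.length = k}) ≃ {i : List (Fin M) // i.length = k + 1} where
  toFun x := ⟨x.1 :: x.2.1, by simp [x.2.2]⟩
  invFun j :=
    match j with
    | ⟨[], h⟩ => absurd h (by simp)
    | ⟨m :: t, h⟩ => (m, ⟨t, by simpa using h⟩)
  left_inv := by rintro ⟨m, ⟨t, ht⟩⟩; rfl
  right_inv := by rintro ⟨i, hi⟩; cases i with
    | nil => simp at hi
    | cons m t => rfl

lemma treeProb_sum (p : Fin N → Fin M → NNReal) (hp : ∀ n, ∑ m, p n m = 1) :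
    ∀ (k : ℕ) (σ : CodeTree M N),
      ∑ i : {i : List (Fin M) // i.length = k}, treeProb p i.1 σ = 1 := by
  intro k
  induction k with
  | zero => intro σ; rw [Fintype.sum_unique]; rfl
  | succ k ih =>
    intro σ
    rw [← Equiv.sum_comp (consEquiv M k) (fun i => treeProb p i.1 σ)]
    rw [Fintype.sum_prod_type]
    have : ∀ (m : Fin M) (i : {i : List (Fin M) // i.length = k}),
        treeProb p ((consEquiv M k (m, i)).1) σ
          = p (σ []) m * treeProb p i.1 (fun j => σ (m :: j)) := fun m i => rfl
    simp_rw [this]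
    rw [show (1 : NNReal) = ∑ m : Fin M, p (σ []) m * 1 by simp [hp (σ [])]]
    exact Finset.sum_congr rfl fun m _ => by rw [← Finset.mul_sum, ih (fun j => σ (m :: j))]

lemma treeProb_congr (p : Fin N → Fin M → NNReal) :
    ∀ (i : List (Fin M)) (σ σ' : CodeTree M N),
      (∀ t : List (Fin M), t.length < i.length → σ t = σ' t) →
      treeProb p i σ = treeProb p i σ' := by
  intro i
  induction i with
  | nil => intros; rfl
  | cons m t ih =>
    intro σ σ' h
    show p (σ []) m * _ = p (σ' []) m * _
    rw [h [] (by simp), ih _ _ (fun s hs => h (m :: s) (by simpa using Nat.succ_lt_succ hs))]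

lemma treeComp_congr (f : Fin N → Fin M → X → X) :
    ∀ (i : List (Fin M)) (σ σ' : CodeTree M N),
      (∀ t : List (Fin M), t.length < i.length → σ t = σ' t) →
      treeComp f i σ = treeComp f i σ' := by
  intro i
  induction i with
  | nil => intros; rfl
  | cons m t ih =>
    intro σ σ' h
    show f (σ []) m ∘ _ = f (σ' []) m ∘ _
    rw [h [] (by simp), ih _ _ (fun s hs => h (m :: s) (by simpa using Nat.succ_lt_succ hs))]

lemma treeComp_append (f : Fin N → Fin M → X → X) :
    ∀ (i j : List (Fin M)) (σ : CodeTree M N),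
      treeComp f (i ++ j) σ = treeComp f i σ ∘ treeComp f j (fun t => σ (i ++ t)) := by
  intro i
  induction i with
  | nil => intros; rfl
  | cons m t ih =>
    intro j σ
    show f (σ []) m ∘ treeComp f (t ++ j) (fun s => σ (m :: s)) = _
    rw [ih j (fun s => σ (m :: s))]
    rfl

lemma treeComp_lipschitz (f : Fin N → Fin M → X → X) {l : NNReal}
    (hf : ∀ n m, LipschitzWith l (f n m)) :
    ∀ (i : List (Fin M)) (σ : CodeTree M N),
      LipschitzWith (l ^ i.length) (treeComp f i σ) := by
  intro i
  induction i with
  | nil => intro σ; simpa [treeComp] using LipschitzWith.id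
  | cons m t ih =>
    intro σ
    have := (hf (σ []) m).comp (ih (fun j => σ (m :: j)))
    simpa [pow_succ, mul_comm, treeComp] using this

end IFSAux

section IFSAux2
set_option linter.unusedSectionVars false

open Metric MeasureTheory Filter Set TopologicalSpace

variable {X : Type*} [MetricSpace X] [CompactSpace X] [Nonempty X]
  [MeasurableSpace X] [BorelSpace X]
variable {M N : ℕ} [NeZero M]

/-- The level-`k` set approximation. -/
def Sset (f : Fin N → Fin M → X → X) (σ : CodeTree M N) (K : Set X) (k : ℕ) : Set X :=
  ⋃ (i : List (Fin M)) (_ : i.length = k), treeComp f i σ '' K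

lemma Sset_eq_iUnion (f : Fin N → Fin M → X → X) (σ : CodeTree M N) (K : Set X) (k : ℕ) :
    Sset f σ K k = ⋃ (i : {i : List (Fin M) // i.length = k}), treeComp f i.1 σ '' K := by
  rw [Sset, Set.iUnion_subtype]

lemma Sset_nonempty (f : Fin N → Fin M → X → X) (σ : CodeTree M N) {K : Set X}
    (hK : K.Nonempty) (k : ℕ) : (Sset f σ K k).Nonempty := by
  obtain ⟨z, hz⟩ := hK
  have hM : 0 < M := Nat.pos_of_ne_zero (NeZero.ne M)
  refine ⟨treeComp f (List.replicate k ⟨0, hM⟩) σ z, ?_⟩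
  rw [Sset]
  exact Set.mem_iUnion.mpr ⟨_, Set.mem_iUnion.mpr ⟨List.length_replicate,
    Set.mem_image_of_mem _ hz⟩⟩

lemma Sset_isCompact (f : Fin N → Fin M → X → X) {l : NNReal}
    (hf : ∀ n m, LipschitzWith l (f n m)) (σ : CodeTree M N) {K : Set X}
    (hKc : IsCompact K) (k : ℕ) : IsCompact (Sset f σ K k) := by
  rw [Sset_eq_iUnion]
  exact isCompact_iUnion fun i =>
    hKc.image ((treeComp_lipschitz f hf i.1 σ).continuous)

lemma tc_dist_le (f : Fin N → Fin M → X → X) {l : NNReal}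
    (hf : ∀ n m, LipschitzWith l (f n m)) (i : List (Fin M)) (σ : CodeTree M N) (x y : X) :
    dist (treeComp f i σ x) (treeComp f i σ y) ≤ (l : ℝ) ^ i.length * diam (univ : Set X) := by
  have h := (treeComp_lipschitz f hf i σ).dist_le_mul x y
  refine h.trans ?_
  have : ((l ^ i.length : NNReal) : ℝ) = (l : ℝ) ^ i.length := by push_cast; ring
  rw [this]
  exact mul_le_mul_of_nonneg_left
    (dist_le_diam_of_mem isCompact_univ.isBounded (mem_univ x) (mem_univ y))
    (by positivity)

lemma Sset_dist (f : Fin N → Fin M → X → X) {l : NNReal}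
    (hf : ∀ n m, LipschitzWith l (f n m)) (σ : CodeTree M N) {K K' : Set X}
    (hK : K.Nonempty) (hK' : K'.Nonempty) {k k' : ℕ} (hkk : k ≤ k') :
    hausdorffDist (Sset f σ K k) (Sset f σ K' k')
      ≤ (l : ℝ) ^ k * diam (univ : Set X) := by
  set D := diam (univ : Set X) with hD
  have hM : 0 < M := Nat.pos_of_ne_zero (NeZero.ne M)
  obtain ⟨z, hz⟩ := hK
  obtain ⟨w, hw⟩ := hK'
  apply hausdorffDist_le_of_mem_dist (by positivity)
  · intro x hx
    rw [Sset] at hx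
    obtain ⟨i, hmem⟩ := Set.mem_iUnion.mp hx
    obtain ⟨hi, hmem⟩ := Set.mem_iUnion.mp hmem
    obtain ⟨z', hz', rfl⟩ := hmem
    set j : List (Fin M) := List.replicate (k' - k) ⟨0, hM⟩ with hj
    refine ⟨treeComp f (i ++ j) σ w, ?_, ?_⟩
    · rw [Sset]
      exact Set.mem_iUnion.mpr ⟨i ++ j, Set.mem_iUnion.mpr
        ⟨by simp [hj, hi, Nat.add_sub_cancel' hkk], Set.mem_image_of_mem _ hw⟩⟩
    · rw [treeComp_append f i j σ]
      have := tc_dist_le f hf i σ z' (treeComp f j (fun t => σ (i ++ t)) w)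
      simpa [hi] using this
  · intro y hy
    rw [Sset] at hy
    obtain ⟨i', hmem⟩ := Set.mem_iUnion.mp hy
    obtain ⟨hi', hmem⟩ := Set.mem_iUnion.mp hmem
    obtain ⟨w', hw', rfl⟩ := hmem
    refine ⟨treeComp f (i'.take k) σ z, ?_, ?_⟩
    · rw [Sset]
      exact Set.mem_iUnion.mpr ⟨i'.take k, Set.mem_iUnion.mpr
        ⟨by simp [hi', hkk], Set.mem_image_of_mem _ hz⟩⟩
    · have hsplit : treeComp f i' σ w'
          = treeComp f (i'.take k) σ
            (treeComp f (i'.drop k) (fun t => σ (i'.take k ++ t)) w') := by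
        conv_lhs => rw [← List.take_append_drop k i']
        rw [treeComp_append]
        rfl
      rw [hsplit]
      have := tc_dist_le f hf (i'.take k) σ z
        (treeComp f (i'.drop k) (fun t => σ (i'.take k ++ t)) w')
      rw [dist_comm] at this
      simpa [hi', min_eq_left hkk] using this

end IFSAux2

section IFSAux3
set_option linter.unusedSectionVars false

open Metric MeasureTheory Filter Set TopologicalSpace

variable {X : Type*} [MetricSpace X] [CompactSpace X] [Nonempty X]
  [MeasurableSpace X] [BorelSpace X]
variable {M N : ℕ} [NeZero M]

/-- Cumulative weights: `cw q j = q 0 + ⋯ + q (j-1)`. -/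
def cw (q : Fin M → NNReal) (j : ℕ) : ℝ :=
  ∑ m ∈ Finset.univ.filter (fun m : Fin M => (m : ℕ) < j), (q m : ℝ)

lemma cw_zero (q : Fin M → NNReal) : cw q 0 = 0 := by simp [cw]

lemma cw_nonneg (q : Fin M → NNReal) (j : ℕ) : 0 ≤ cw q j :=
  Finset.sum_nonneg fun m _ => (q m).coe_nonneg

lemma cw_mono (q : Fin M → NNReal) : Monotone (cw q) := by
  intro a b hab
  apply Finset.sum_le_sum_of_subset_of_nonneg
  · intro m hm
    simp only [Finset.mem_filter, Finset.mem_univ, true_and] at *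
    exact hm.trans_le hab
  · exact fun m _ _ => (q m).coe_nonneg

lemma cw_succ (q : Fin M → NNReal) (m : Fin M) :
    cw q ((m : ℕ) + 1) = cw q m + (q m : ℝ) := by
  rw [cw, cw, show Finset.univ.filter (fun x : Fin M => (x : ℕ) < (m : ℕ) + 1)
      = insert m (Finset.univ.filter (fun x : Fin M => (x : ℕ) < (m : ℕ))) by
    ext x
    simp [Nat.lt_succ_iff_lt_or_eq, Fin.ext_iff, or_comm]
    exact le_iff_eq_or_lt.trans (or_congr_left Fin.ext_iff)]
  rw [Finset.sum_insert (by simp)]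
  ring

lemma cw_top (q : Fin M → NNReal) (hq : ∑ m, q m = 1) : cw q M = 1 := by
  rw [cw, show Finset.univ.filter (fun x : Fin M => (x : ℕ) < M) = Finset.univ by
    ext x; simp [x.2]]
  rw [← NNReal.coe_sum, hq, NNReal.coe_one]

open scoped Classical in
/-- Select the subinterval of `[0,1)` (partitioned according to `q`) containing `t`. -/
noncomputable def sel (q : Fin M → NNReal) (t : ℝ) : Fin M :=
  ⟨Nat.findGreatest (fun j => cw q j ≤ t) (M - 1),
    lt_of_le_of_lt (Nat.findGreatest_le _)
      (Nat.sub_lt (Nat.pos_of_ne_zero (NeZero.ne M)) one_pos)⟩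

open scoped Classical in
lemma sel_eq (q : Fin M → NNReal) (m : Fin M) {t : ℝ}
    (h1 : cw q m ≤ t) (h2 : t < cw q ((m : ℕ) + 1)) : sel q t = m := by
  have hM : 0 < M := Nat.pos_of_ne_zero (NeZero.ne M)
  apply Fin.ext
  show Nat.findGreatest (fun j => cw q j ≤ t) (M - 1) = (m : ℕ)
  rw [Nat.findGreatest_eq_iff]
  refine ⟨Nat.le_sub_one_of_lt m.2, fun _ => h1, fun n hn hn' hle => ?_⟩
  exact absurd (lt_of_le_of_lt (le_trans (cw_mono q hn) hle) h2) (lt_irrefl _)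

open scoped Classical in
lemma sel_measurable (q : Fin M → NNReal) : Measurable (sel q) := by
  apply measurable_to_countable'
  intro m
  have : sel q ⁻¹' {m} =
      {t : ℝ | (m : ℕ) ≠ 0 → cw q m ≤ t} ∩
        ⋂ n : ℕ, {t : ℝ | (m : ℕ) < n → n ≤ M - 1 → ¬ cw q n ≤ t} := by
    ext t
    simp only [Set.mem_preimage, Set.mem_singleton_iff, Set.mem_inter_iff, Set.mem_iInter,
      Set.mem_setOf_eq]
    constructor
    · rintro rfl
      have := (Nat.findGreatest_eq_iff (m := (sel q t : ℕ))
        (P := fun j => cw q j ≤ t) (k := M - 1)).mp rfl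
      exact ⟨this.2.1, fun n h1 h2 => this.2.2 h1 h2⟩
    · rintro ⟨h1, h2⟩
      apply Fin.ext
      show Nat.findGreatest (fun j => cw q j ≤ t) (M - 1) = (m : ℕ)
      rw [Nat.findGreatest_eq_iff]
      exact ⟨Nat.le_sub_one_of_lt m.2, h1, fun n hn hn' => h2 n hn hn'⟩
  rw [this]
  apply MeasurableSet.inter
  · by_cases h : (m : ℕ) = 0
    · simp only [h]; simpa using MeasurableSet.univ
    · have : {t : ℝ | (m : ℕ) ≠ 0 → cw q m ≤ t} = Ici (cw q m) := by
        ext t; simp [h]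
      rw [this]; exact measurableSet_Ici
  · apply MeasurableSet.iInter
    intro n
    by_cases h1 : (m : ℕ) < n
    · by_cases h2 : n ≤ M - 1
      · have : {t : ℝ | (m : ℕ) < n → n ≤ M - 1 → ¬ cw q n ≤ t} = Iio (cw q n) := by
          ext t; simp [h1, h2, not_le]
        rw [this]; exact measurableSet_Iio
      · have : {t : ℝ | (m : ℕ) < n → n ≤ M - 1 → ¬ cw q n ≤ t} = univ := by
          ext t; simp [h2]
        rw [this]; exact MeasurableSet.univ
    · have : {t : ℝ | (m : ℕ) < n → n ≤ M - 1 → ¬ cw q n ≤ t} = univ := by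
        ext t; simp [h1]
      rw [this]; exact MeasurableSet.univ

/-- The level-`k` approximation of the coding map `[0,1) → X`. -/
noncomputable def seqApprox (f : Fin N → Fin M → X → X) (p : Fin N → Fin M → NNReal)
    (x₀ : X) : ℕ → CodeTree M N → ℝ → X
  | 0, _, _ => x₀
  | (k+1), σ, t =>
      let m := sel (p (σ [])) t
      f (σ []) m (seqApprox f p x₀ k (fun j => σ (m :: j))
        ((t - cw (p (σ [])) m) / (p (σ []) m : ℝ)))

lemma seqApprox_measurable (f : Fin N → Fin M → X → X) {l : NNReal}
    (hf : ∀ n m, LipschitzWith l (f n m)) (p : Fin N → Fin M → NNReal) (x₀ : X) :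
    ∀ (k : ℕ) (σ : CodeTree M N), Measurable (seqApprox f p x₀ k σ) := by
  intro k
  induction k with
  | zero => intro σ; exact measurable_const
  | succ k ih =>
    intro σ
    have : seqApprox f p x₀ (k+1) σ =
        (fun x : ℝ × Fin M => f (σ []) x.2 (seqApprox f p x₀ k (fun j => σ (x.2 :: j))
          ((x.1 - cw (p (σ [])) x.2) / (p (σ []) x.2 : ℝ))))
        ∘ (fun t => (t, sel (p (σ [])) t)) := rfl
    rw [this]
    apply Measurable.comp
    · apply measurable_from_prod_countable_left
      intro m
      show Measurable fun t : ℝ => f (σ []) m (seqApprox f p x₀ k (fun j => σ (m :: j))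
        ((t - cw (p (σ [])) m) / (p (σ []) m : ℝ)))
      exact ((hf (σ []) m).continuous.measurable).comp'
        ((ih _).comp' ((measurable_id'.sub_const _).div_const _))
    · exact measurable_id.prodMk (sel_measurable _)

lemma seqApprox_dist_succ (f : Fin N → Fin M → X → X) {l : NNReal}
    (hf : ∀ n m, LipschitzWith l (f n m)) (p : Fin N → Fin M → NNReal) (x₀ : X) :
    ∀ (k : ℕ) (σ : CodeTree M N) (t : ℝ),
      dist (seqApprox f p x₀ k σ t) (seqApprox f p x₀ (k+1) σ t)
        ≤ diam (univ : Set X) * (l : ℝ) ^ k := by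
  intro k
  induction k with
  | zero =>
    intro σ t
    simpa using dist_le_diam_of_mem isCompact_univ.isBounded (mem_univ _) (mem_univ _)
  | succ k ih =>
    intro σ t
    show dist (f (σ []) _ _) (f (σ []) _ _) ≤ _
    refine le_trans ((hf _ _).dist_le_mul _ _) ?_
    calc (l : ℝ) * dist (seqApprox f p x₀ k _ _) (seqApprox f p x₀ (k+1) _ _)
        ≤ (l : ℝ) * (diam (univ : Set X) * (l : ℝ) ^ k) := by
          exact mul_le_mul_of_nonneg_left (ih _ _) l.coe_nonneg
      _ = diam (univ : Set X) * (l : ℝ) ^ (k+1) := by ring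

end IFSAux3

section IFSAux4
set_option linter.unusedSectionVars false

open Metric MeasureTheory Filter Set TopologicalSpace

variable {X : Type*} [MetricSpace X] [CompactSpace X] [Nonempty X]
  [MeasurableSpace X] [BorelSpace X]
variable {M N : ℕ} [NeZero M]

/-- The coding map `[0,1) → X` associated to a code tree: pointwise limit of the
`seqApprox` approximations. -/
noncomputable def gLim (f : Fin N → Fin M → X → X) (p : Fin N → Fin M → NNReal)
    (x₀ : X) (σ : CodeTree M N) (t : ℝ) : X :=
  limUnder atTop (fun k => seqApprox f p x₀ k σ t)

lemma gLim_tendsto (f : Fin N → Fin M → X → X) {l : NNReal} (hl : l < 1)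
    (hf : ∀ n m, LipschitzWith l (f n m)) (p : Fin N → Fin M → NNReal) (x₀ : X)
    (σ : CodeTree M N) (t : ℝ) :
    Tendsto (fun k => seqApprox f p x₀ k σ t) atTop (nhds (gLim f p x₀ σ t)) := by
  have hc : CauchySeq (fun k => seqApprox f p x₀ k σ t) :=
    cauchySeq_of_le_geometric (l : ℝ) (diam (univ : Set X)) hl
      (fun n => seqApprox_dist_succ f hf p x₀ n σ t)
  exact hc.tendsto_limUnder

lemma gLim_dist (f : Fin N → Fin M → X → X) {l : NNReal} (hl : l < 1)
    (hf : ∀ n m, LipschitzWith l (f n m)) (p : Fin N → Fin M → NNReal) (x₀ : X)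
    (σ : CodeTree M N) (t : ℝ) (k : ℕ) :
    dist (seqApprox f p x₀ k σ t) (gLim f p x₀ σ t)
      ≤ diam (univ : Set X) * (l : ℝ) ^ k / (1 - (l : ℝ)) :=
  dist_le_of_le_geometric_of_tendsto (l : ℝ) (diam (univ : Set X)) hl
    (fun n => seqApprox_dist_succ f hf p x₀ n σ t)
    (gLim_tendsto f hl hf p x₀ σ t) k

lemma gLim_measurable (f : Fin N → Fin M → X → X) {l : NNReal} (hl : l < 1)
    (hf : ∀ n m, LipschitzWith l (f n m)) (p : Fin N → Fin M → NNReal) (x₀ : X)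
    (σ : CodeTree M N) : Measurable (gLim f p x₀ σ) := by
  apply measurable_of_tendsto_metrizable (fun k => seqApprox_measurable f hf p x₀ k σ)
  rw [tendsto_pi_nhds]
  exact fun t => gLim_tendsto f hl hf p x₀ σ t

lemma integrableOn_Ico_of_bound {F : ℝ → ℝ} (hF : Measurable F) (B : ℝ)
    (hB : ∀ t, |F t| ≤ B) (a b : ℝ) : IntegrableOn F (Ico a b) := by
  haveI : IsFiniteMeasure (MeasureTheory.volume.restrict (Ico a b)) := by
    constructor
    rw [Measure.restrict_apply_univ, Real.volume_Ico]
    exact ENNReal.ofReal_lt_top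
  exact Integrable.mono' (integrable_const B) hF.aestronglyMeasurable
    (Filter.Eventually.of_forall fun t => by rw [Real.norm_eq_abs]; exact hB t)

/-- Change of variables for an affine map on a half-open interval. -/
lemma integral_affine_Ico (h : ℝ → ℝ) (c q : ℝ) (hq : 0 < q) :
    ∫ t in Ico c (c + q), h ((t - c) / q) = q * ∫ s in Ico (0:ℝ) 1, h s := by
  have e1 : ∀ (a b : ℝ) (g : ℝ → ℝ), ∫ t in Ico a b, g t = ∫ t in Ioc a b, g t :=
    fun a b g => by rw [Measure.restrict_congr_set Ico_ae_eq_Ioc]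
  rw [e1, e1]
  have hcq : c ≤ c + q := by linarith
  rw [← intervalIntegral.integral_of_le hcq, ← intervalIntegral.integral_of_le zero_le_one]
  have := intervalIntegral.integral_comp_sub_right (a := c) (b := c + q)
    (fun u => h (u / q)) c
  simp only [sub_self, add_sub_cancel_left] at this
  rw [this, intervalIntegral.integral_comp_div (a := 0) (b := q) h hq.ne']
  rw [zero_div, div_self hq.ne']
  simp [smul_eq_mul]

/-- Splitting `[0,1)` into the subintervals determined by the weights `q`. -/
lemma integral_partition {F : ℝ → ℝ} (hF : Measurable F) (B : ℝ) (hB : ∀ t, |F t| ≤ B)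
    (q : Fin M → NNReal) (hq : ∑ m, q m = 1) :
    ∫ t in Ico (0:ℝ) 1, F t
      = ∑ m : Fin M, ∫ t in Ico (cw q m) (cw q ((m : ℕ) + 1)), F t := by
  have key : ∀ J : ℕ, J ≤ M →
      ∫ t in Ico (0:ℝ) (cw q J), F t
        = ∑ j ∈ Finset.range J, ∫ t in Ico (cw q j) (cw q (j + 1)), F t := by
    intro J
    induction J with
    | zero => intro _; simp [cw_zero]
    | succ J ih =>
      intro hJ
      have hJ' : J ≤ M := Nat.le_of_succ_le hJ
      have h1 : (0:ℝ) ≤ cw q J := cw_nonneg q J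
      have h2 : cw q J ≤ cw q (J + 1) := cw_mono q (Nat.le_succ J)
      rw [← Set.Ico_union_Ico_eq_Ico h1 h2]
      rw [MeasureTheory.setIntegral_union (Set.Ico_disjoint_Ico.mpr (le_trans (min_le_left _ _) (le_max_right _ _)))
        measurableSet_Ico (integrableOn_Ico_of_bound hF B hB _ _)
        (integrableOn_Ico_of_bound hF B hB _ _)]
      rw [ih hJ', Finset.sum_range_succ]
  have h0 : cw q 0 = 0 := cw_zero q
  have hM : cw q M = 1 := cw_top q hq
  rw [show (1:ℝ) = cw q M from hM.symm, key M le_rfl,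
    ← Fin.sum_univ_eq_sum_range (fun j => ∫ t in Ico (cw q j) (cw q (j + 1)), F t) M]

/-- The integral of `φ ∘ seqApprox k σ` over `[0,1)` equals the level-`k` weighted sum. -/
lemma seqApprox_integral (f : Fin N → Fin M → X → X) {l : NNReal}
    (hf : ∀ n m, LipschitzWith l (f n m)) (p : Fin N → Fin M → NNReal)
    (hp : ∀ n, ∑ m, p n m = 1) (x₀ : X) :
    ∀ (k : ℕ) (σ : CodeTree M N) (φ : X → ℝ) (hφ : Measurable φ) (B : ℝ)
      (hB : ∀ x, |φ x| ≤ B),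
      ∫ t in Ico (0:ℝ) 1, φ (seqApprox f p x₀ k σ t)
        = ∑ i : {i : List (Fin M) // i.length = k},
            (treeProb p i.1 σ : ℝ) * φ (treeComp f i.1 σ x₀) := by
  intro k
  induction k with
  | zero =>
    intro σ φ hφ B hB
    rw [Fintype.sum_unique]
    show ∫ _ in Ico (0:ℝ) 1, φ x₀ = ((1 : NNReal) : ℝ) * φ x₀
    rw [MeasureTheory.setIntegral_const]
    simp [Real.volume_Ico]
  | succ k ih =>
    intro σ φ hφ B hB
    set n := σ [] with hn
    set q := p n with hqdef
    -- split the integral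
    have hmeas : Measurable (fun t => φ (seqApprox f p x₀ (k+1) σ t)) :=
      hφ.comp' (seqApprox_measurable f hf p x₀ (k+1) σ)
    have hbd : ∀ t, |φ (seqApprox f p x₀ (k+1) σ t)| ≤ B := fun t => hB _
    rw [integral_partition hmeas B hbd q (hp n)]
    -- on each piece, rewrite and change variables
    have piece : ∀ m : Fin M,
        ∫ t in Ico (cw q m) (cw q ((m : ℕ) + 1)), φ (seqApprox f p x₀ (k+1) σ t)
          = (q m : ℝ) * ∫ s in Ico (0:ℝ) 1,
              φ (f n m (seqApprox f p x₀ k (fun j => σ (m :: j)) s)) := by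
      intro m
      by_cases hqm : (q m : ℝ) = 0
      · rw [cw_succ, hqm, add_zero, Set.Ico_self]
        simp [hqm]
      have hqm' : 0 < (q m : ℝ) := lt_of_le_of_ne (q m).coe_nonneg (Ne.symm hqm)
      have congrstep : ∫ t in Ico (cw q m) (cw q ((m : ℕ) + 1)), φ (seqApprox f p x₀ (k+1) σ t)
          = ∫ t in Ico (cw q m) (cw q ((m : ℕ) + 1)),
              φ (f n m (seqApprox f p x₀ k (fun j => σ (m :: j))
                ((t - cw q m) / (q m : ℝ)))) := by
        apply MeasureTheory.setIntegral_congr_fun measurableSet_Ico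
        intro t ht
        have hsel : sel q t = m := sel_eq q m ht.1 ht.2
        show φ (seqApprox f p x₀ (k+1) σ t) = _
        simp only [seqApprox, hsel, ← hn, ← hqdef]
      rw [congrstep, cw_succ]
      exact integral_affine_Ico
        (fun s => φ (f n m (seqApprox f p x₀ k (fun j => σ (m :: j)) s))) _ _ hqm'
    simp_rw [piece]
    -- apply the inductive hypothesis on each piece
    have ihm : ∀ m : Fin M,
        ∫ s in Ico (0:ℝ) 1, φ (f n m (seqApprox f p x₀ k (fun j => σ (m :: j)) s))
          = ∑ i : {i : List (Fin M) // i.length = k},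
              (treeProb p i.1 (fun j => σ (m :: j)) : ℝ)
                * φ (f n m (treeComp f i.1 (fun j => σ (m :: j)) x₀)) := by
      intro m
      exact ih (fun j => σ (m :: j)) (fun x => φ (f n m x))
        (hφ.comp' (hf n m).continuous.measurable) B (fun x => hB _)
    simp_rw [ihm]
    -- reindex by the cons equivalence
    rw [← Equiv.sum_comp (consEquiv M k)
      (fun i : {i : List (Fin M) // i.length = k + 1} =>
        (treeProb p i.1 σ : ℝ) * φ (treeComp f i.1 σ x₀))]
    rw [Fintype.sum_prod_type]
    apply Finset.sum_congr rfl
    intro m _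
    rw [Finset.mul_sum]
    apply Finset.sum_congr rfl
    intro i _
    show ((q m : ℝ)) * ((treeProb p i.1 (fun j => σ (m :: j)) : ℝ)
        * φ (f n m (treeComp f i.1 (fun j => σ (m :: j)) x₀)))
      = ((treeProb p (m :: i.1) σ : ℝ)) * φ (treeComp f (m :: i.1) σ x₀)
    show _ = ((p (σ []) m * treeProb p i.1 (fun j => σ (m :: j)) : NNReal) : ℝ)
        * φ ((f (σ []) m ∘ treeComp f i.1 (fun j => σ (m :: j))) x₀)
    simp only [Function.comp_apply, ← hn]
    push_cast
    ring

end IFSAux4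

/-- **Random fractal sets and measures exist.** Given a superIFS of `N` IFSs on a compact
metric space, for each code tree `σ ∈ Ω` the level-`k` set approximations
`F_k(σ)(K) = ⋃_{|i|=k} f^{σ(∅)}_{i₁}∘⋯∘f^{σ(i₁…i_{k-1})}_{i_k}(K)` converge in the
Hausdorff metric to a limit `FS σ` independent of `K`, the level-`k` measure
approximations converge in the Monge–Kantorovich metric to a limit `FM σ` independent
of `ς`, in both cases uniformly in all arguments, and the limit maps
`FS : Ω → H(X)`, `FM : Ω → P(X)` are continuous. -/
theorem stmt_8 {X : Type*} [MetricSpace X] [CompactSpace X] [Nonempty X]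
    [MeasurableSpace X] [BorelSpace X]
    {M N : ℕ} [NeZero M] (hN : 0 < N)
    (f : Fin N → Fin M → X → X) (l : NNReal) (hl : l < 1)
    (hf : ∀ n m, LipschitzWith l (f n m))
    (p : Fin N → Fin M → NNReal) (hp : ∀ n, ∑ m, p n m = 1) :
    ∃ (FS : CodeTree M N → NonemptyCompacts X) (FM : CodeTree M N → Measure X),
      (∀ σ, IsProbabilityMeasure (FM σ)) ∧
      (∀ ε : ℝ, 0 < ε → ∃ k₀ : ℕ, ∀ k ≥ k₀, ∀ (σ : CodeTree M N) (K : Set X),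
        K.Nonempty → IsCompact K →
        hausdorffDist (⋃ (i : List (Fin M)) (_ : i.length = k), treeComp f i σ '' K)
          (FS σ : Set X) < ε) ∧
      (∀ ε : ℝ, 0 < ε → ∃ k₀ : ℕ, ∀ k ≥ k₀, ∀ (σ : CodeTree M N) (ς : Measure X),
        IsProbabilityMeasure ς →
        MKdist (Measure.sum fun i : {i : List (Fin M) // i.length = k} =>
            (treeProb p i.1 σ : ENNReal) • ς.map (treeComp f i.1 σ)) (FM σ) < ε) ∧
      Continuous FS ∧
      (∀ (σ : CodeTree M N) (ε : ℝ), 0 < ε → ∃ δ : ℝ, 0 < δ ∧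
        ∀ σ' : CodeTree M N, dist σ' σ < δ → MKdist (FM σ') (FM σ) < ε) := by
  classical
  have hM : 0 < M := Nat.pos_of_ne_zero (NeZero.ne M)
  set D := diam (univ : Set X) with hDdef
  have hD0 : 0 ≤ D := diam_nonneg
  have hl0 : 0 ≤ (l : ℝ) := l.coe_nonneg
  have hl1 : (l : ℝ) < 1 := by exact_mod_cast hl
  have h1l : 0 < 1 - (l : ℝ) := by linarith
  obtain ⟨x₀⟩ := (inferInstance : Nonempty X)
  -- generic smallness
  have hsmall : ∀ C ε : ℝ, 0 < ε → ∃ k₀ : ℕ, ∀ k ≥ k₀, (l : ℝ) ^ k * C < ε := by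
    intro C ε hε
    have ht : Tendsto (fun k : ℕ => (l : ℝ) ^ k * C) atTop (nhds 0) := by
      simpa using (tendsto_pow_atTop_nhds_zero_of_lt_one hl0 hl1).mul_const C
    exact eventually_atTop.mp (ht.eventually (gt_mem_nhds hε))
  -- ** Set part **
  let SC : CodeTree M N → ℕ → NonemptyCompacts X := fun σ k =>
    ⟨⟨Sset f σ univ k, Sset_isCompact f hf σ isCompact_univ k⟩,
      Sset_nonempty f σ univ_nonempty k⟩
  have hSCcar : ∀ σ k, (SC σ k : Set X) = Sset f σ univ k := fun _ _ => rfl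
  have hdistSC : ∀ (σ : CodeTree M N) (n m K : ℕ), K ≤ n → K ≤ m →
      dist (SC σ n) (SC σ m) ≤ (l : ℝ) ^ K * D := by
    intro σ n m K hn hm
    rw [NonemptyCompacts.dist_eq]
    rcases le_total n m with h | h
    · refine (Sset_dist f hf σ univ_nonempty univ_nonempty h).trans ?_
      exact mul_le_mul_of_nonneg_right (pow_le_pow_of_le_one hl0 hl1.le hn) hD0
    · rw [hausdorffDist_comm]
      refine (Sset_dist f hf σ univ_nonempty univ_nonempty h).trans ?_
      exact mul_le_mul_of_nonneg_right (pow_le_pow_of_le_one hl0 hl1.le hm) hD0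
  have hcauchy : ∀ σ, CauchySeq (SC σ) := fun σ =>
    cauchySeq_of_le_tendsto_0 (fun K => (l : ℝ) ^ K * D) (hdistSC σ)
      (by simpa using (tendsto_pow_atTop_nhds_zero_of_lt_one hl0 hl1).mul_const D)
  have hFSex : ∀ σ, ∃ A : NonemptyCompacts X, Tendsto (SC σ) atTop (nhds A) :=
    fun σ => cauchySeq_tendsto_of_complete (hcauchy σ)
  choose FS hFS using hFSex
  have hFSdist : ∀ σ k, dist (SC σ k) (FS σ) ≤ (l : ℝ) ^ k * D := by
    intro σ k
    have h1 : Tendsto (fun m => dist (SC σ k) (SC σ m)) atTop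
        (nhds (dist (SC σ k) (FS σ))) := tendsto_const_nhds.dist (hFS σ)
    apply le_of_tendsto h1
    filter_upwards [eventually_ge_atTop k] with m hm
    exact hdistSC σ k m k le_rfl hm
  -- agreement from closeness of code trees
  have hagree : ∀ (k : ℕ) (σ σ' : CodeTree M N), dist σ' σ < (1 / (M : ℝ)) ^ k →
      ∀ t : List (Fin M), t.length < k → σ' t = σ t := by
    intro k σ σ' hσ' t ht
    by_contra hnet
    have hne : σ' ≠ σ := fun h => hnet (by rw [h])
    have hd : dist σ' σ = (1 / (M : ℝ)) ^ (Nat.find (codetree_exists_disagree hne)) := by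
      show treeDist σ' σ = _
      rw [treeDist, dif_neg hne]
    have hfind : Nat.find (codetree_exists_disagree hne) ≤ t.length :=
      Nat.find_le ⟨t, rfl, hnet⟩
    have hmono : (1 / (M : ℝ)) ^ k ≤ (1 / (M : ℝ)) ^ (Nat.find (codetree_exists_disagree hne)) := by
      apply pow_le_pow_of_le_one (by positivity)
      · rw [div_le_one (by exact_mod_cast hM)]
        exact_mod_cast hM
      · exact hfind.trans ht.le
    rw [hd] at hσ'
    linarith
  -- ** Measure part **
  haveI hIco : IsProbabilityMeasure (MeasureTheory.volume.restrict (Ico (0:ℝ) 1)) := by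
    constructor
    rw [Measure.restrict_apply_univ, Real.volume_Ico]
    norm_num
  let FM : CodeTree M N → Measure X := fun σ =>
    (MeasureTheory.volume.restrict (Ico (0:ℝ) 1)).map (gLim f p x₀ σ)
  have hFMprob : ∀ σ, IsProbabilityMeasure (FM σ) := fun σ =>
    Measure.isProbabilityMeasure_map (gLim_measurable f hl hf p x₀ σ).aemeasurable
  have hbound : ∀ (φ : X → ℝ), LipschitzWith 1 φ → ∀ x, |φ x| ≤ |φ x₀| + D := by
    intro φ hφ x
    have h1 : |φ x - φ x₀| ≤ dist x x₀ := by
      rw [← Real.dist_eq]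
      simpa using hφ.dist_le_mul x x₀
    have h2 : dist x x₀ ≤ D := dist_le_diam_of_mem isCompact_univ.isBounded
      (mem_univ _) (mem_univ _)
    calc |φ x| = |φ x - φ x₀ + φ x₀| := by ring_nf
      _ ≤ |φ x - φ x₀| + |φ x₀| := abs_add_le _ _
      _ ≤ |φ x₀| + D := by linarith
  -- claim 2 : FM σ vs the level-k weighted sum
  have hFMA : ∀ (σ : CodeTree M N) (k : ℕ) (φ : X → ℝ), LipschitzWith 1 φ →
      |(∫ x, φ x ∂(FM σ)) - ∑ i : {i : List (Fin M) // i.length = k},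
          (treeProb p i.1 σ : ℝ) * φ (treeComp f i.1 σ x₀)|
        ≤ D * (l : ℝ) ^ k / (1 - (l : ℝ)) := by
    intro σ k φ hφ
    have hφm : Measurable φ := hφ.continuous.measurable
    have hmap : ∫ x, φ x ∂(FM σ) = ∫ t in Ico (0:ℝ) 1, φ (gLim f p x₀ σ t) :=
      integral_map (gLim_measurable f hl hf p x₀ σ).aemeasurable
        hφ.continuous.aestronglyMeasurable
    rw [hmap, ← seqApprox_integral f hf p hp x₀ k σ φ hφm (|φ x₀| + D) (hbound φ hφ)]
    have hint1 : IntegrableOn (fun t => φ (gLim f p x₀ σ t)) (Ico (0:ℝ) 1) :=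
      integrableOn_Ico_of_bound (hφm.comp' (gLim_measurable f hl hf p x₀ σ))
        (|φ x₀| + D) (fun t => hbound φ hφ _) 0 1
    have hint2 : IntegrableOn (fun t => φ (seqApprox f p x₀ k σ t)) (Ico (0:ℝ) 1) :=
      integrableOn_Ico_of_bound (hφm.comp' (seqApprox_measurable f hf p x₀ k σ))
        (|φ x₀| + D) (fun t => hbound φ hφ _) 0 1
    rw [← integral_sub hint1 hint2]
    have key := norm_integral_le_of_norm_le_const
      (μ := MeasureTheory.volume.restrict (Ico (0:ℝ) 1))
      (f := fun t => φ (gLim f p x₀ σ t) - φ (seqApprox f p x₀ k σ t))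
      (C := D * (l : ℝ) ^ k / (1 - (l : ℝ)))
      (Filter.Eventually.of_forall (fun t => by
        rw [Real.norm_eq_abs, ← Real.dist_eq]
        calc dist (φ (gLim f p x₀ σ t)) (φ (seqApprox f p x₀ k σ t))
            ≤ dist (gLim f p x₀ σ t) (seqApprox f p x₀ k σ t) := by
              simpa using hφ.dist_le_mul _ _
          _ = dist (seqApprox f p x₀ k σ t) (gLim f p x₀ σ t) := dist_comm _ _
          _ ≤ D * (l : ℝ) ^ k / (1 - (l : ℝ)) := gLim_dist f hl hf p x₀ σ t k))
    rw [Real.norm_eq_abs] at key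
    simpa using key
  -- claim 1 : the μ_k approximations vs the level-k weighted sum
  have hμA : ∀ (σ : CodeTree M N) (k : ℕ) (ς : Measure X), IsProbabilityMeasure ς →
      ∀ (φ : X → ℝ), LipschitzWith 1 φ →
      |(∫ x, φ x ∂(Measure.sum fun i : {i : List (Fin M) // i.length = k} =>
            (treeProb p i.1 σ : ENNReal) • ς.map (treeComp f i.1 σ)))
          - ∑ i : {i : List (Fin M) // i.length = k},
              (treeProb p i.1 σ : ℝ) * φ (treeComp f i.1 σ x₀)|
        ≤ (l : ℝ) ^ k * D := by
    intro σ k ς hς φ hφ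
    have hφm : Measurable φ := hφ.continuous.measurable
    haveI : ∀ i : {i : List (Fin M) // i.length = k},
        IsProbabilityMeasure (ς.map (treeComp f i.1 σ)) := fun i =>
      Measure.isProbabilityMeasure_map ((treeComp_lipschitz f hf i.1 σ).continuous.measurable).aemeasurable
    have hintmap : ∀ i : {i : List (Fin M) // i.length = k},
        Integrable φ (ς.map (treeComp f i.1 σ)) := fun i =>
      Integrable.mono' (integrable_const (|φ x₀| + D)) hφm.aestronglyMeasurable
        (Filter.Eventually.of_forall fun x => by
          rw [Real.norm_eq_abs]; exact hbound φ hφ x)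
    have hint : ∀ i ∈ (Finset.univ : Finset {i : List (Fin M) // i.length = k}),
        Integrable φ ((treeProb p i.1 σ : ENNReal) • ς.map (treeComp f i.1 σ)) := fun i _ =>
      (hintmap i).smul_measure ENNReal.coe_ne_top
    rw [Measure.sum_fintype, integral_finset_sum_measure hint]
    have hterm : ∀ i : {i : List (Fin M) // i.length = k},
        ∫ x, φ x ∂((treeProb p i.1 σ : ENNReal) • ς.map (treeComp f i.1 σ))
          = (treeProb p i.1 σ : ℝ) * ∫ x, φ (treeComp f i.1 σ x) ∂ς := by
      intro i
      rw [integral_smul_measure, integral_map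
        ((treeComp_lipschitz f hf i.1 σ).continuous.measurable).aemeasurable
        hφm.aestronglyMeasurable]
      simp [smul_eq_mul]
    simp_rw [hterm]
    rw [← Finset.sum_sub_distrib]
    refine (Finset.abs_sum_le_sum_abs _ _).trans ?_
    have hone : ∑ i : {i : List (Fin M) // i.length = k}, ((treeProb p i.1 σ : ℝ))
        = 1 := by
      rw [← NNReal.coe_sum, treeProb_sum p hp k σ, NNReal.coe_one]
    calc ∑ i : {i : List (Fin M) // i.length = k},
          |(treeProb p i.1 σ : ℝ) * ∫ x, φ (treeComp f i.1 σ x) ∂ς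
            - (treeProb p i.1 σ : ℝ) * φ (treeComp f i.1 σ x₀)|
        ≤ ∑ i : {i : List (Fin M) // i.length = k},
            (treeProb p i.1 σ : ℝ) * ((l : ℝ) ^ k * D) := by
          apply Finset.sum_le_sum
          intro i _
          rw [← mul_sub, abs_mul, abs_of_nonneg (treeProb p i.1 σ).coe_nonneg]
          apply mul_le_mul_of_nonneg_left _ (treeProb p i.1 σ).coe_nonneg
          -- |∫ φ(T_i x) dς - φ(T_i x₀)| ≤ l^k D
          have hconst : φ (treeComp f i.1 σ x₀)
              = ∫ _x, φ (treeComp f i.1 σ x₀) ∂ς := by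
            rw [integral_const]
            simp
          rw [hconst]
          have hintc : Integrable (fun x => φ (treeComp f i.1 σ x)) ς := by
            refine Integrable.mono' (integrable_const (|φ x₀| + D))
              (hφm.comp' (treeComp_lipschitz f hf i.1 σ).continuous.measurable).aestronglyMeasurable
              (Filter.Eventually.of_forall fun x => ?_)
            rw [Real.norm_eq_abs]; exact hbound φ hφ _
          rw [← integral_sub hintc (integrable_const _)]
          have key := norm_integral_le_of_norm_le_const (μ := ς)
            (f := fun x => φ (treeComp f i.1 σ x) - φ (treeComp f i.1 σ x₀))
            (C := (l : ℝ) ^ k * D)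
            (Filter.Eventually.of_forall (fun x => by
              rw [Real.norm_eq_abs, ← Real.dist_eq]
              calc dist (φ (treeComp f i.1 σ x)) (φ (treeComp f i.1 σ x₀))
                  ≤ dist (treeComp f i.1 σ x) (treeComp f i.1 σ x₀) := by
                    simpa using hφ.dist_le_mul _ _
                _ ≤ (l : ℝ) ^ i.1.length * D := tc_dist_le f hf i.1 σ x x₀
                _ = (l : ℝ) ^ k * D := by rw [i.2]))
          rw [Real.norm_eq_abs] at key
          simpa using key
      _ = (l : ℝ) ^ k * D := by rw [← Finset.sum_mul, hone, one_mul]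
  -- assemble
  refine ⟨FS, FM, hFMprob, ?_, ?_, ?_, ?_⟩
  · -- set convergence, uniform
    intro ε hε
    obtain ⟨k₀, hk₀⟩ := hsmall (2 * D) ε hε
    refine ⟨k₀, fun k hk σ K hK hKc => ?_⟩
    show hausdorffDist (Sset f σ K k) (FS σ : Set X) < ε
    have h1 : hausdorffDist (Sset f σ K k) (Sset f σ univ k) ≤ (l : ℝ) ^ k * D :=
      Sset_dist f hf σ hK univ_nonempty le_rfl
    have h2 : hausdorffDist (Sset f σ univ k) (FS σ : Set X) ≤ (l : ℝ) ^ k * D := by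
      have := hFSdist σ k
      rwa [NonemptyCompacts.dist_eq, hSCcar] at this
    have hfin : EMetric.hausdorffEdist (Sset f σ K k) (Sset f σ univ k) ≠ ⊤ :=
      hausdorffEdist_ne_top_of_nonempty_of_bounded (Sset_nonempty f σ hK k)
        (Sset_nonempty f σ univ_nonempty k)
        (Sset_isCompact f hf σ hKc k).isBounded
        (Sset_isCompact f hf σ isCompact_univ k).isBounded
    calc hausdorffDist (Sset f σ K k) (FS σ : Set X)
        ≤ hausdorffDist (Sset f σ K k) (Sset f σ univ k)
            + hausdorffDist (Sset f σ univ k) (FS σ : Set X) :=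
          hausdorffDist_triangle hfin
      _ ≤ (l : ℝ) ^ k * D + (l : ℝ) ^ k * D := add_le_add h1 h2
      _ = (l : ℝ) ^ k * (2 * D) := by ring
      _ < ε := hk₀ k hk
  · -- measure convergence, uniform
    intro ε hε
    obtain ⟨k₀, hk₀⟩ := hsmall (D + D / (1 - (l : ℝ))) ε hε
    refine ⟨k₀, fun k hk σ ς hς => ?_⟩
    have hb0 : 0 ≤ (l : ℝ) ^ k * (D + D / (1 - (l : ℝ))) := by positivity
    have hub : ∀ (φ : {g : X → ℝ // LipschitzWith 1 g}),
        (∫ x, φ.1 x ∂(Measure.sum fun i : {i : List (Fin M) // i.length = k} =>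
            (treeProb p i.1 σ : ENNReal) • ς.map (treeComp f i.1 σ)))
          - (∫ x, φ.1 x ∂(FM σ))
          ≤ (l : ℝ) ^ k * (D + D / (1 - (l : ℝ))) := by
      intro φ
      have h1 := hμA σ k ς hς φ.1 φ.2
      have h2 := hFMA σ k φ.1 φ.2
      have e1 := abs_le.mp h1
      have e2 := abs_le.mp h2
      have hring : (l : ℝ) ^ k * (D + D / (1 - (l : ℝ)))
          = (l : ℝ) ^ k * D + D * (l : ℝ) ^ k / (1 - (l : ℝ)) := by ring
      linarith [e1.1, e1.2, e2.1, e2.2]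
    exact lt_of_le_of_lt (Real.iSup_le hub hb0) (hk₀ k hk)
  · -- continuity of FS
    rw [Metric.continuous_iff]
    intro σ ε hε
    obtain ⟨k, hk⟩ := hsmall (2 * D) ε hε
    refine ⟨(1 / (M : ℝ)) ^ k, by positivity, fun σ' hσ' => ?_⟩
    have hag := hagree k σ σ' hσ'
    have hSC : SC σ' k = SC σ k := by
      have hcar : Sset f σ' univ k = Sset f σ univ k := by
        rw [Sset, Sset]
        apply Set.iUnion_congr
        intro i
        apply Set.iUnion_congr
        intro hi
        rw [treeComp_congr f i σ' σ (fun t ht => hag t (by rw [← hi]; exact ht))]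
      ext1
      rw [hSCcar, hSCcar, hcar]
    calc dist (FS σ') (FS σ)
        ≤ dist (FS σ') (SC σ' k) + dist (SC σ' k) (FS σ) := dist_triangle _ _ _
      _ = dist (SC σ' k) (FS σ') + dist (SC σ k) (FS σ) := by rw [dist_comm, hSC]
      _ ≤ (l : ℝ) ^ k * D + (l : ℝ) ^ k * D := add_le_add (hFSdist σ' k) (hFSdist σ k)
      _ = (l : ℝ) ^ k * (2 * D) := by ring
      _ < ε := hk k le_rfl
  · -- continuity of FM
    intro σ ε hε
    obtain ⟨k, hk⟩ := hsmall (2 * (D / (1 - (l : ℝ)))) ε hε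
    refine ⟨(1 / (M : ℝ)) ^ k, by positivity, fun σ' hσ' => ?_⟩
    have hag := hagree k σ σ' hσ'
    have hA : ∑ i : {i : List (Fin M) // i.length = k},
        (treeProb p i.1 σ' : ℝ) * ((fun x => x) ∘ id) 0 = 0 := by simp
    have hAeq : ∀ (φ : X → ℝ),
        (∑ i : {i : List (Fin M) // i.length = k},
          (treeProb p i.1 σ' : ℝ) * φ (treeComp f i.1 σ' x₀))
        = ∑ i : {i : List (Fin M) // i.length = k},
            (treeProb p i.1 σ : ℝ) * φ (treeComp f i.1 σ x₀) := by
      intro φ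
      apply Finset.sum_congr rfl
      intro i _
      rw [treeProb_congr p i.1 σ' σ (fun t ht => hag t (by rw [← i.2]; exact ht)),
        treeComp_congr f i.1 σ' σ (fun t ht => hag t (by rw [← i.2]; exact ht))]
    have hb0 : 0 ≤ (l : ℝ) ^ k * (2 * (D / (1 - (l : ℝ)))) := by positivity
    have hub : ∀ (φ : {g : X → ℝ // LipschitzWith 1 g}),
        (∫ x, φ.1 x ∂(FM σ')) - (∫ x, φ.1 x ∂(FM σ))
          ≤ (l : ℝ) ^ k * (2 * (D / (1 - (l : ℝ)))) := by
      intro φ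
      have h1 := hFMA σ' k φ.1 φ.2
      have h2 := hFMA σ k φ.1 φ.2
      rw [hAeq φ.1] at h1
      have e1 := abs_le.mp h1
      have e2 := abs_le.mp h2
      have hring : (l : ℝ) ^ k * (2 * (D / (1 - (l : ℝ))))
          = D * (l : ℝ) ^ k / (1 - (l : ℝ)) + D * (l : ℝ) ^ k / (1 - (l : ℝ)) := by ring
      linarith [e1.1, e1.2, e2.1, e2.2]
    exact lt_of_le_of_lt (Real.iSup_le hub hb0) (hk k le_rfl)
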